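/- Let W be a self-adjoint nonnegative compact operator whose eigenvalues form the multiset {ω_h}_{h∈ℤ^s}, where ω_h = ω^{∑_{j=1}^s a_j|h_j|^{b_j}} with ω ∈ (0,1), a_j ≥ 1, b_j ≥ 1. Let λ₁ ≥ λ₂ ≥ … be the ordered eigenvalues. Then for every η ∈ (0,1) and every n ∈ ℕ, λ_n ≤ n^{-1/η} · ∏_{j=1}^s (1 + 2ω^{η a_j}/(1-ω^{η a_j}))^{1/η}. -/

import Mathlib

theorem eigenvalue_decay (s : ℕ) (ω : ℝ) (hω0 : 0 < ω) (hω1 : ω < 1)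
    (a b : Fin s → ℝ) (ha : ∀ j, 1 ≤ a j) (hb : ∀ j, 1 ≤ b j)
    (lam : ℕ → ℝ) (hmono : Antitone lam) (e : ℕ ≃ (Fin s → ℤ))
    (hlam : ∀ k, lam k = ω ^ (∑ j, a j * (|e k j| : ℝ) ^ (b j)))
    (η : ℝ) (hη0 : 0 < η) (hη1 : η < 1) (n : ℕ) (hn : 1 ≤ n) :
    lam (n - 1) ≤ (n : ℝ) ^ (-(1 / η)) *
      (∏ j, (1 + 2 * ω ^ (η * a j) / (1 - ω ^ (η * a j)))) ^ (1 / η) := by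
  set r : Fin s → ℝ := fun j => ω ^ (η * a j) with hr_def
  have haj : ∀ j, 0 < η * a j := fun j => by
    have := ha j; positivity
  have hr0 : ∀ j, 0 < r j := fun j => Real.rpow_pos_of_pos hω0 _
  have hr1 : ∀ j, r j < 1 := fun j => Real.rpow_lt_one hω0.le hω1 (haj j)
  have hr1' : ∀ j, 0 < 1 - r j := fun j => by linarith [hr1 j]
  set C : ℝ := ∏ j, (1 + 2 * r j / (1 - r j)) with hC_def
  have hCpos : 0 < C := Finset.prod_pos (fun j _ => by
    have := hr0 j; have := hr1' j; positivity)
  set f : Fin s → ℤ → ℝ := fun j m => ω ^ (η * (a j * (|m| : ℝ) ^ (b j))) with hf_def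
  have hf_le : ∀ j m, f j m ≤ r j ^ m.natAbs := by
    intro j m
    rcases eq_or_ne m 0 with rfl | hm
    · simp [hf_def, Real.zero_rpow (by linarith [hb j] : b j ≠ 0)]
    · have h1 : (1 : ℝ) ≤ (m.natAbs : ℝ) := by
        exact_mod_cast Nat.one_le_iff_ne_zero.mpr (Int.natAbs_ne_zero.mpr hm)
      have habs : |(m : ℝ)| = (m.natAbs : ℝ) := by rw [Nat.cast_natAbs, Int.cast_abs]
      have h2 : (m.natAbs : ℝ) ≤ |(m : ℝ)| ^ (b j) := by
        calc (m.natAbs : ℝ) = |(m : ℝ)| ^ (1 : ℝ) := by rw [habs, Real.rpow_one]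
        _ ≤ |(m : ℝ)| ^ (b j) :=
          Real.rpow_le_rpow_of_exponent_le (by rw [habs]; exact h1) (hb j)
      have h3 : η * a j * (m.natAbs : ℝ) ≤ η * (a j * |(m : ℝ)| ^ (b j)) := by
        have h4 := haj j
        nlinarith
      calc f j m ≤ ω ^ (η * a j * (m.natAbs : ℝ)) :=
            Real.rpow_le_rpow_of_exponent_ge hω0 hω1.le h3
      _ = (ω ^ (η * a j)) ^ ((m.natAbs : ℝ)) := by rw [← Real.rpow_mul hω0.le]
      _ = r j ^ m.natAbs := by rw [Real.rpow_natCast]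
  have hf_pos : ∀ j m, 0 < f j m := fun j m => Real.rpow_pos_of_pos hω0 _
  -- geometric bounds
  have hgeom : ∀ j (T : Finset ℕ), ∑ i ∈ T, r j ^ i ≤ (1 - r j)⁻¹ := by
    intro j T
    have := Summable.sum_le_tsum T (fun i _ => pow_nonneg (hr0 j).le i)
      (summable_geometric_of_lt_one (hr0 j).le (hr1 j))
    rwa [tsum_geometric_of_lt_one (hr0 j).le (hr1 j)] at this
  have hgeom1 : ∀ j (T : Finset ℕ), 0 ∉ T → ∑ i ∈ T, r j ^ i ≤ r j * (1 - r j)⁻¹ := by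
    intro j T hT
    have hsub : T ⊆ (Finset.range (T.sup id + 1)).image (· + 1) := by
      intro i hi
      have hi1 : 1 ≤ i := Nat.one_le_iff_ne_zero.mpr (fun h => hT (h ▸ hi))
      refine Finset.mem_image.mpr ⟨i - 1, Finset.mem_range.mpr ?_, by omega⟩
      have := Finset.le_sup (f := id) hi
      simp only [id_eq] at this
      omega
    calc ∑ i ∈ T, r j ^ i ≤ ∑ i ∈ (Finset.range (T.sup id + 1)).image (· + 1), r j ^ i :=
          Finset.sum_le_sum_of_subset_of_nonneg hsub (fun i _ _ => by positivity)
    _ = ∑ i ∈ Finset.range (T.sup id + 1), r j ^ (i + 1) :=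
          Finset.sum_image (fun x _ y _ h => Nat.add_right_cancel h)
    _ = r j * ∑ i ∈ Finset.range (T.sup id + 1), r j ^ i := by
          rw [Finset.mul_sum]; exact Finset.sum_congr rfl (fun i _ => by ring)
    _ ≤ r j * (1 - r j)⁻¹ :=
          mul_le_mul_of_nonneg_left (hgeom j _) (hr0 j).le
  -- bound on the sum over a symmetric interval
  have hIcc : ∀ j (M : ℕ), ∑ m ∈ Finset.Icc (-(M : ℤ)) M, f j m ≤ 1 + 2 * r j / (1 - r j) := by
    intro j M
    have key : ∀ (I : Finset ℤ), (∀ x ∈ I, ∀ y ∈ I, x.natAbs = y.natAbs → x = y) →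
        ∑ m ∈ I, f j m ≤ ∑ i ∈ I.image Int.natAbs, r j ^ i := by
      intro I hinj
      calc ∑ m ∈ I, f j m ≤ ∑ m ∈ I, r j ^ m.natAbs :=
            Finset.sum_le_sum (fun m _ => hf_le j m)
      _ = ∑ i ∈ I.image Int.natAbs, r j ^ i := (Finset.sum_image hinj).symm
    have hsplit : Finset.Icc (-(M : ℤ)) M = Finset.Icc (-(M : ℤ)) (-1) ∪ Finset.Icc 0 M := by
      ext x; simp only [Finset.mem_union, Finset.mem_Icc]; omega
    have hdisj : Disjoint (Finset.Icc (-(M : ℤ)) (-1)) (Finset.Icc 0 (M : ℤ)) := by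
      rw [Finset.disjoint_left]; intro x hx hx'
      simp only [Finset.mem_Icc] at hx hx'; omega
    have h1 : ∑ m ∈ Finset.Icc (-(M : ℤ)) (-1), f j m ≤ r j * (1 - r j)⁻¹ := by
      refine (key _ ?_).trans (hgeom1 j _ ?_)
      · intro x hx y hy hxy
        simp only [Finset.mem_Icc] at hx hy; omega
      · intro h
        obtain ⟨x, hx, hx0⟩ := Finset.mem_image.mp h
        simp only [Finset.mem_Icc] at hx; omega
    have h2 : ∑ m ∈ Finset.Icc (0 : ℤ) M, f j m ≤ (1 - r j)⁻¹ := by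
      refine (key _ ?_).trans (hgeom j _)
      intro x hx y hy hxy
      simp only [Finset.mem_Icc] at hx hy; omega
    have heq : r j * (1 - r j)⁻¹ + (1 - r j)⁻¹ = 1 + 2 * r j / (1 - r j) := by
      have hne : (1 - r j) ≠ 0 := (hr1' j).ne'
      field_simp
      ring
    rw [hsplit, Finset.sum_union hdisj, ← heq]
    exact add_le_add h1 h2
  -- ω to a sum of exponents is a product
  have hprod : ∀ (c : Fin s → ℝ), ω ^ (∑ j, c j) = ∏ j, ω ^ (c j) := by
    intro c
    rw [Real.rpow_def_of_pos hω0, Finset.mul_sum, Real.exp_sum]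
    exact Finset.prod_congr rfl (fun j _ => (Real.rpow_def_of_pos hω0 _).symm)
  -- lam k ^ η = ∏ j, f j (e k j)
  have hlam_pow : ∀ k, lam k ^ η = ∏ j, f j (e k j) := by
    intro k
    calc lam k ^ η = ω ^ (∑ j, (a j * (|e k j| : ℝ) ^ (b j)) * η) := by
          rw [hlam k, ← Real.rpow_mul hω0.le, Finset.sum_mul]
    _ = ∏ j, ω ^ ((a j * (|e k j| : ℝ) ^ (b j)) * η) := hprod _
    _ = ∏ j, f j (e k j) := Finset.prod_congr rfl (fun j _ => by rw [mul_comm])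
  have hlampos : ∀ k, 0 < lam k := fun k => by
    rw [hlam]; exact Real.rpow_pos_of_pos hω0 _
  -- main bound
  have hmain : (n : ℝ) * lam (n - 1) ^ η ≤ C := by
    set M := Finset.sup (Finset.range n) (fun k => Finset.sup Finset.univ
      (fun j => (e k j).natAbs)) with hM
    have step1 : (n : ℝ) * lam (n - 1) ^ η ≤ ∑ k ∈ Finset.range n, lam k ^ η := by
      have hterm : ∀ k ∈ Finset.range n, lam (n - 1) ^ η ≤ lam k ^ η := by
        intro k hk
        have hk' : k ≤ n - 1 := by have := Finset.mem_range.mp hk; omega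
        exact Real.rpow_le_rpow (hlampos _).le (hmono hk') hη0.le
      calc (n : ℝ) * lam (n - 1) ^ η = (Finset.range n).card • (lam (n - 1) ^ η) := by
            simp [nsmul_eq_mul]
      _ ≤ ∑ k ∈ Finset.range n, lam k ^ η := Finset.card_nsmul_le_sum _ _ _ hterm
    have step2 : ∑ k ∈ Finset.range n, lam k ^ η
        = ∑ h ∈ (Finset.range n).image e, ∏ j, f j (h j) := by
      rw [Finset.sum_image (fun x _ y _ h => e.injective h)]
      exact Finset.sum_congr rfl (fun k _ => hlam_pow k)
    have hsub : (Finset.range n).image e ⊆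
        Fintype.piFinset (fun _ : Fin s => Finset.Icc (-(M : ℤ)) M) := by
      intro h hh
      obtain ⟨k, hk, rfl⟩ := Finset.mem_image.mp hh
      rw [Fintype.mem_piFinset]
      intro j
      have h1 : (e k j).natAbs ≤ M :=
        le_trans (Finset.le_sup (f := fun j => (e k j).natAbs) (Finset.mem_univ j))
          (Finset.le_sup (f := fun k => Finset.sup Finset.univ
            (fun j => (e k j).natAbs)) hk)
      simp only [Finset.mem_Icc]
      omega
    have step3 : ∑ h ∈ (Finset.range n).image e, ∏ j, f j (h j)
        ≤ ∑ h ∈ Fintype.piFinset (fun _ : Fin s => Finset.Icc (-(M : ℤ)) M),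
            ∏ j, f j (h j) :=
      Finset.sum_le_sum_of_subset_of_nonneg hsub
        (fun h _ _ => Finset.prod_nonneg (fun j _ => (hf_pos j _).le))
    have step4 : ∑ h ∈ Fintype.piFinset (fun _ : Fin s => Finset.Icc (-(M : ℤ)) M),
        ∏ j, f j (h j) = ∏ j, ∑ m ∈ Finset.Icc (-(M : ℤ)) M, f j m :=
      (Finset.prod_univ_sum _ _).symm
    have step5 : ∏ j, ∑ m ∈ Finset.Icc (-(M : ℤ)) M, f j m ≤ C :=
      Finset.prod_le_prod
        (fun j _ => Finset.sum_nonneg (fun m _ => (hf_pos j m).le))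
        (fun j _ => hIcc j M)
    linarith [step1, step3, step5, step2 ▸ step1, step4 ▸ step3]
  -- conclude
  have hnpos : (0 : ℝ) < n := by exact_mod_cast hn
  have hle : lam (n - 1) ^ η ≤ C / n := by
    rw [le_div_iff₀ hnpos]
    linarith [hmain]
  have hrw : lam (n - 1) = (lam (n - 1) ^ η) ^ (1 / η) := by
    rw [← Real.rpow_mul (hlampos _).le, mul_one_div_cancel hη0.ne', Real.rpow_one]
  rw [hrw]
  calc (lam (n - 1) ^ η) ^ (1 / η) ≤ (C / n) ^ (1 / η) :=
        Real.rpow_le_rpow (Real.rpow_nonneg (hlampos _).le _) hle (by positivity)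
  _ = C ^ (1 / η) / (n : ℝ) ^ (1 / η) := Real.div_rpow hCpos.le (Nat.cast_nonneg n) _
  _ = (n : ℝ) ^ (-(1 / η)) * C ^ (1 / η) := by
        rw [div_eq_mul_inv, ← Real.rpow_neg (Nat.cast_nonneg n), mul_comm]
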